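/- arXiv:2304.10613 — 3 statements merged into one kernel-verified Lean document; each statement's English description precedes it below -/
import Mathlib

section
/- Let q : ℝ → ℝ be four times continuously differentiable with a_3 := sup |q'''| < ∞ and a_4 := sup |q''''| < ∞. Let D be a distribution on ℝ with mean h and central moments σ_l = |E[(δ − h)^l]| < ∞ for l = 2, 3, 4, let δ̄_1, δ̄_2 be independent, each distributed as the average of m i.i.d. samples from D, and define the second-order extrapolation L^{(2)}_{D_m} q(s) = 2 q(s + (δ̄_1 + δ̄_2)/2) − (q(s + δ̄_1) + q(s + δ̄_2))/2. Then for every s ∈ ℝ, |E[L^{(2)}_{D_m} q(s)] − q(s + h)| ≤ (4 a_3 σ_3 + 9 a_4 σ_2^2)/(48 m^2) + (5 a_4 / 96) · (σ_4 − 3 σ_2^2)/m^3, where σ_4 = E[(δ − h)^4]. -/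
open MeasureTheory ProbabilityTheory

open scoped ENNReal

section SEhelpers
open intervalIntegral


lemma SE.abs_int_abs_pow (k : ℕ) (x : ℝ) :
    |∫ t in (0:ℝ)..x, |t| ^ k| = |x| ^ (k + 1) / (k + 1) := by
  rcases le_total 0 x with hx | hx
  · have h1 : ∫ t in (0:ℝ)..x, |t| ^ k = ∫ t in (0:ℝ)..x, t ^ k := by
      apply intervalIntegral.integral_congr
      intro t ht
      rw [Set.uIcc_of_le hx] at ht
      show |t| ^ k = t ^ k
      rw [abs_of_nonneg ht.1]
    rw [h1, integral_pow]
    rw [abs_of_nonneg hx]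
    have : (0:ℝ) ≤ x ^ (k+1) / (k+1) := by positivity
    rw [abs_of_nonneg (by simpa using this)]
    simp
  · have h1 : ∫ t in (0:ℝ)..x, |t| ^ k = ∫ t in (0:ℝ)..x, (-t) ^ k := by
      apply intervalIntegral.integral_congr
      intro t ht
      rw [Set.uIcc_of_ge hx] at ht
      show |t| ^ k = (-t) ^ k
      rw [abs_of_nonpos ht.2]
    rw [h1]
    have h2 : ∫ t in (0:ℝ)..x, (-t) ^ k = ∫ t in (-x)..(0:ℝ), t ^ k := by
      simpa using intervalIntegral.integral_comp_neg (a := (0:ℝ)) (b := x) (fun t => t ^ k)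
    rw [h2, integral_pow]
    rw [abs_of_nonpos hx]
    have hnx : (0:ℝ) ≤ -x := neg_nonneg.2 hx
    have : (0:ℝ) ≤ (-x) ^ (k+1) / ((k:ℝ)+1) := div_nonneg (pow_nonneg hnx _) (by positivity)
    rw [show ((0:ℝ) ^ (k+1) - (-x) ^ (k+1)) / ((k:ℝ)+1) = -((-x) ^ (k+1) / ((k:ℝ)+1)) by ring,
      abs_neg, abs_of_nonneg this]

lemma SE.step (G g : ℝ → ℝ) (hd : ∀ t, HasDerivAt G (g t) t) (hc : Continuous g)
    (h0 : G 0 = 0) {C : ℝ} {k : ℕ} (hC : 0 ≤ C) (hb : ∀ t, |g t| ≤ C * |t| ^ k) (x : ℝ) :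
    |G x| ≤ C * |x| ^ (k + 1) / (k + 1) := by
  have hint : ∀ a b : ℝ, IntervalIntegrable g volume a b := fun a b => hc.intervalIntegrable a b
  have hGx : G x = ∫ t in (0:ℝ)..x, g t := by
    rw [intervalIntegral.integral_eq_sub_of_hasDerivAt (fun t _ => hd t) (hint 0 x), h0, sub_zero]
  rw [hGx]
  calc |∫ t in (0:ℝ)..x, g t| ≤ |∫ t in (0:ℝ)..x, C * |t| ^ k| := by
        rw [← Real.norm_eq_abs (∫ t in (0:ℝ)..x, g t)]
        apply intervalIntegral.norm_integral_le_abs_of_norm_le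
        · exact Filter.Eventually.of_forall fun t => by simpa using hb t
        · exact (continuous_const.mul ((continuous_abs).pow k)).intervalIntegrable 0 x
    _ = C * |x| ^ (k + 1) / (k + 1) := by
        rw [intervalIntegral.integral_const_mul, abs_mul, abs_of_nonneg hC,
          SE.abs_int_abs_pow, mul_div_assoc]


lemma SE.taylor_bound (f : ℝ → ℝ) (hf : ContDiff ℝ 4 f) {C : ℝ}
    (hC : ∀ x, |iteratedDeriv 4 f x| ≤ C) (x : ℝ) :
    |f x - (f 0 + iteratedDeriv 1 f 0 * x + iteratedDeriv 2 f 0 * (x ^ 2 / 2)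
      + iteratedDeriv 3 f 0 * (x ^ 3 / 6))| ≤ C * x ^ 4 / 24 := by
  have hC0 : 0 ≤ C := le_trans (abs_nonneg _) (hC 0)
  have H : ∀ n : ℕ, n < 4 → ∀ t : ℝ, HasDerivAt (iteratedDeriv n f) (iteratedDeriv (n + 1) f t) t := by
    intro n hn t
    have hdiff : Differentiable ℝ (iteratedDeriv n f) :=
      hf.differentiable_iteratedDeriv n (by exact_mod_cast hn)
    rw [iteratedDeriv_succ]
    exact (hdiff t).hasDerivAt
  have Hc : ∀ n : ℕ, n ≤ 4 → Continuous (iteratedDeriv n f) := by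
    intro n hn
    exact hf.continuous_iteratedDeriv n (by exact_mod_cast hn)
  set c1 := iteratedDeriv 1 f 0 with hc1
  set c2 := iteratedDeriv 2 f 0 with hc2
  set c3 := iteratedDeriv 3 f 0 with hc3
  -- level 3
  have h3 : ∀ t : ℝ, |iteratedDeriv 3 f t - c3| ≤ C * |t| ^ 1 := by
    intro t
    have := SE.step (k := 0) (fun t => iteratedDeriv 3 f t - c3) (iteratedDeriv 4 f)
      (fun t => (H 3 (by norm_num) t).sub_const c3) (Hc 4 le_rfl) (by simp [hc3]) hC0
      (fun t => by simpa using hC t) t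
    refine le_trans this (le_of_eq ?_)
    push_cast
    ring
  -- level 2
  have h2 : ∀ t : ℝ, |iteratedDeriv 2 f t - c2 - c3 * t| ≤ C / 2 * |t| ^ 2 := by
    intro t
    have hd : ∀ u : ℝ, HasDerivAt (fun t => iteratedDeriv 2 f t - c2 - c3 * t)
        (iteratedDeriv 3 f u - c3) u := by
      intro u
      have h := ((H 2 (by norm_num) u).sub_const c2).sub ((hasDerivAt_id u).const_mul c3)
      exact h.congr_deriv (by simp)
    have := SE.step _ (fun u => iteratedDeriv 3 f u - c3) hd
      ((Hc 3 (by norm_num)).sub continuous_const) (by simp [hc2]) hC0 h3 t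
    refine le_trans this (le_of_eq ?_)
    push_cast
    ring
  -- level 1
  have h1 : ∀ t : ℝ, |iteratedDeriv 1 f t - c1 - c2 * t - c3 * (t ^ 2 / 2)| ≤ C / 6 * |t| ^ 3 := by
    intro t
    have hd : ∀ u : ℝ, HasDerivAt (fun t => iteratedDeriv 1 f t - c1 - c2 * t - c3 * (t ^ 2 / 2))
        (iteratedDeriv 2 f u - c2 - c3 * u) u := by
      intro u
      have h := (((H 1 (by norm_num) u).sub_const c1).sub ((hasDerivAt_id u).const_mul c2)).sub
        (((hasDerivAt_pow 2 u).div_const 2).const_mul c3)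
      refine h.congr_deriv ?_
      push_cast
      ring
    have hb : ∀ u : ℝ, |iteratedDeriv 2 f u - c2 - c3 * u| ≤ (C / 2) * |u| ^ 2 := h2
    have := SE.step _ (fun u => iteratedDeriv 2 f u - c2 - c3 * u) hd
      (((Hc 2 (by norm_num)).sub continuous_const).sub (continuous_const.mul continuous_id))
      (by simp [hc1, hc2, hc3, iteratedDeriv_one]) (by positivity) hb t
    refine le_trans this (le_of_eq ?_)
    push_cast
    ring
  -- level 0
  have h0 : ∀ t : ℝ, |f t - f 0 - c1 * t - c2 * (t ^ 2 / 2) - c3 * (t ^ 3 / 6)|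
      ≤ C / 24 * |t| ^ 4 := by
    intro t
    have hf1 : ∀ u : ℝ, HasDerivAt f (iteratedDeriv 1 f u) u := by
      intro u
      rw [iteratedDeriv_one]
      exact ((hf.differentiable (by norm_num)) u).hasDerivAt
    have hd : ∀ u : ℝ, HasDerivAt (fun t => f t - f 0 - c1 * t - c2 * (t ^ 2 / 2) - c3 * (t ^ 3 / 6))
        (iteratedDeriv 1 f u - c1 - c2 * u - c3 * (u ^ 2 / 2)) u := by
      intro u
      have h := ((((hf1 u).sub_const (f 0)).sub ((hasDerivAt_id u).const_mul c1)).sub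
        (((hasDerivAt_pow 2 u).div_const 2).const_mul c2)).sub
        (((hasDerivAt_pow 3 u).div_const 6).const_mul c3)
      refine h.congr_deriv ?_
      push_cast
      ring
    have := SE.step _ (fun u => iteratedDeriv 1 f u - c1 - c2 * u - c3 * (u ^ 2 / 2)) hd
      ((((Hc 1 (by norm_num)).sub continuous_const).sub (continuous_const.mul continuous_id)).sub
        (continuous_const.mul ((continuous_pow 2).div_const 2)))
      (by simp [hc1, hc2, hc3, iteratedDeriv_one]) (by positivity) h1 t
    refine le_trans this (le_of_eq ?_)
    push_cast
    ring
  have := h0 x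
  have habs : |x| ^ 4 = x ^ 4 := by
    rw [← abs_pow, abs_of_nonneg (by positivity)]
  calc |f x - (f 0 + c1 * x + c2 * (x ^ 2 / 2) + c3 * (x ^ 3 / 6))|
      = |f x - f 0 - c1 * x - c2 * (x ^ 2 / 2) - c3 * (x ^ 3 / 6)| := by ring_nf
    _ ≤ C / 24 * |x| ^ 4 := h0 x
    _ = C * x ^ 4 / 24 := by rw [habs]; ring

lemma SE.integrable_pow {Ω : Type*} [MeasurableSpace Ω] {μ : Measure Ω} [IsProbabilityMeasure μ]
    {W : Ω → ℝ} (hW : MemLp W 4 μ) {k : ℕ} (hk : k ≤ 4) :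
    Integrable (fun ω => W ω ^ k) μ := by
  have h4 : Integrable (fun ω => ‖W ω‖ ^ ((4 : ℝ≥0∞)).toReal) μ :=
    hW.integrable_norm_rpow (by norm_num) (by norm_num)
  have h4' : Integrable (fun ω => |W ω| ^ (4 : ℕ)) μ := by
    refine h4.congr (Filter.Eventually.of_forall fun ω => ?_)
    show ‖W ω‖ ^ ((4 : ℝ≥0∞)).toReal = |W ω| ^ (4 : ℕ)
    rw [Real.norm_eq_abs,
      show ((4 : ℝ≥0∞)).toReal = ((4 : ℕ) : ℝ) by norm_num, Real.rpow_natCast]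
  refine ((integrable_const (1 : ℝ)).add h4').mono'
    ((hW.aestronglyMeasurable.aemeasurable.pow_const k).aestronglyMeasurable) ?_
  refine Filter.Eventually.of_forall fun ω => ?_
  rw [Real.norm_eq_abs, abs_pow]
  rcases le_total |W ω| 1 with hw | hw
  · have : |W ω| ^ k ≤ 1 := pow_le_one₀ (abs_nonneg _) hw
    have h2 : (0:ℝ) ≤ |W ω| ^ 4 := by positivity
    simpa using le_trans this (by linarith)
  · have : |W ω| ^ k ≤ |W ω| ^ 4 := pow_le_pow_right₀ hw hk
    simp only [Pi.add_apply]
    linarith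

lemma SE.moments {Ω : Type*} [MeasurableSpace Ω] {μ : Measure Ω} [IsProbabilityMeasure μ]
    {ι : Type*} (Z : ι → Ω → ℝ) (Z0 : Ω → ℝ)
    (hmeas : ∀ i, Measurable (Z i))
    (hindep : iIndepFun Z μ)
    (hident : ∀ i, IdentDistrib (Z i) Z0 μ μ)
    (hL4 : MemLp Z0 4 μ) (hmean : ∫ ω, Z0 ω ∂μ = 0) (s : Finset ι) :
    (∫ ω, (∑ i ∈ s, Z i ω) ∂μ = 0) ∧
    (∫ ω, (∑ i ∈ s, Z i ω) ^ 2 ∂μ = s.card * ∫ ω, Z0 ω ^ 2 ∂μ) ∧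
    (∫ ω, (∑ i ∈ s, Z i ω) ^ 3 ∂μ = s.card * ∫ ω, Z0 ω ^ 3 ∂μ) ∧
    (∫ ω, (∑ i ∈ s, Z i ω) ^ 4 ∂μ = s.card * ∫ ω, Z0 ω ^ 4 ∂μ
      + 3 * s.card * ((s.card : ℝ) - 1) * (∫ ω, Z0 ω ^ 2 ∂μ) ^ 2) := by
  classical
  have hZmem : ∀ i, MemLp (Z i) 4 μ := fun i => (hident i).symm.memLp_snd hL4
  induction s using Finset.induction_on with
  | empty => simp
  | @insert a s ha IH =>
    obtain ⟨IH1, IH2, IH3, IH4⟩ := IH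
    set c2 := ∫ ω, Z0 ω ^ 2 ∂μ with hc2
    set c3 := ∫ ω, Z0 ω ^ 3 ∂μ with hc3
    set c4 := ∫ ω, Z0 ω ^ 4 ∂μ with hc4
    set S : Ω → ℝ := fun ω => ∑ i ∈ s, Z i ω with hS
    set n : ℝ := (s.card : ℝ) with hn
    -- basic facts
    have hSmem : MemLp S 4 μ := memLp_finset_sum s (fun i _ => hZmem i)
    have IS : ∀ k : ℕ, k ≤ 4 → Integrable (fun ω => S ω ^ k) μ :=
      fun k hk => SE.integrable_pow hSmem hk
    have IZ : ∀ k : ℕ, k ≤ 4 → Integrable (fun ω => Z a ω ^ k) μ :=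
      fun k hk => SE.integrable_pow (hZmem a) hk
    have hind : IndepFun S (Z a) μ := by
      have := hindep.indepFun_finset_sum_of_notMem hmeas ha
      have e : (∑ j ∈ s, Z j) = S := by funext ω; simp [hS]
      rwa [e] at this
    have hindp : ∀ j l : ℕ, IndepFun (fun ω => S ω ^ j) (fun ω => Z a ω ^ l) μ :=
      fun j l => hind.comp (measurable_id.pow_const j) (measurable_id.pow_const l)
    have IP : ∀ j l : ℕ, j ≤ 4 → l ≤ 4 → Integrable (fun ω => S ω ^ j * Z a ω ^ l) μ := by
      intro j l hj hl
      have := (hindp j l).integrable_mul (IS j hj) (IZ l hl)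
      exact this
    have EP : ∀ j l : ℕ, j ≤ 4 → l ≤ 4 →
        ∫ ω, S ω ^ j * Z a ω ^ l ∂μ = (∫ ω, S ω ^ j ∂μ) * ∫ ω, Z a ω ^ l ∂μ := by
      intro j l hj hl
      have := (hindp j l).integral_mul_eq_mul_integral (IS j hj).aestronglyMeasurable (IZ l hl).aestronglyMeasurable
      simpa [Pi.mul_apply] using this
    have EZ : ∀ k : ℕ, ∫ ω, Z a ω ^ k ∂μ = ∫ ω, Z0 ω ^ k ∂μ := by
      intro k
      exact ((hident a).comp (measurable_id.pow_const k)).integral_eq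
    have EZ1 : ∫ ω, Z a ω ∂μ = 0 := ((hident a).integral_eq).trans hmean
    have ES1 : ∫ ω, S ω ∂μ = 0 := IH1
    have ES1' : ∫ ω, S ω ^ 1 ∂μ = 0 := by simpa using IH1
    have EZ1' : ∫ ω, Z a ω ^ 1 ∂μ = 0 := by simpa using EZ1
    have hsum : ∀ ω, (∑ i ∈ insert a s, Z i ω) = Z a ω + S ω := by
      intro ω; rw [Finset.sum_insert ha]
    have hcard : ((insert a s).card : ℝ) = n + 1 := by
      rw [Finset.card_insert_of_notMem ha]; push_cast [hn]; ring
    -- first moment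
    have M1 : ∫ ω, (∑ i ∈ insert a s, Z i ω) ∂μ = 0 := by
      simp_rw [hsum]
      rw [integral_add (by simpa using IZ 1 (by norm_num)) (by simpa using IS 1 (by norm_num)),
        EZ1, ES1, add_zero]
    -- second moment
    have M2 : ∫ ω, (∑ i ∈ insert a s, Z i ω) ^ 2 ∂μ = (n + 1) * c2 := by
      simp_rw [hsum]
      have e : ∀ ω : Ω, (Z a ω + S ω) ^ 2
          = Z a ω ^ 2 + 2 * (S ω ^ 1 * Z a ω ^ 1) + S ω ^ 2 := by intro ω; ring
      simp_rw [e]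
      have J1 : Integrable (fun ω => Z a ω ^ 2 + 2 * (S ω ^ 1 * Z a ω ^ 1)) μ :=
        (IZ 2 (by norm_num)).add ((IP 1 1 (by norm_num) (by norm_num)).const_mul 2)
      rw [integral_add J1 (IS 2 (by norm_num)),
        integral_add (IZ 2 (by norm_num)) ((IP 1 1 (by norm_num) (by norm_num)).const_mul 2),
        MeasureTheory.integral_const_mul]
      rw [EP 1 1 (by norm_num) (by norm_num), ES1', EZ 2, IH2]
      ring
    -- third moment
    have M3 : ∫ ω, (∑ i ∈ insert a s, Z i ω) ^ 3 ∂μ = (n + 1) * c3 := by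
      simp_rw [hsum]
      have e : ∀ ω : Ω, (Z a ω + S ω) ^ 3
          = Z a ω ^ 3 + 3 * (S ω ^ 1 * Z a ω ^ 2) + 3 * (S ω ^ 2 * Z a ω ^ 1) + S ω ^ 3 := by
        intro ω; ring
      simp_rw [e]
      have J1 : Integrable (fun ω => Z a ω ^ 3 + 3 * (S ω ^ 1 * Z a ω ^ 2)) μ :=
        (IZ 3 (by norm_num)).add ((IP 1 2 (by norm_num) (by norm_num)).const_mul 3)
      have J2 : Integrable (fun ω => Z a ω ^ 3 + 3 * (S ω ^ 1 * Z a ω ^ 2)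
          + 3 * (S ω ^ 2 * Z a ω ^ 1)) μ :=
        J1.add ((IP 2 1 (by norm_num) (by norm_num)).const_mul 3)
      rw [integral_add J2 (IS 3 (by norm_num)),
        integral_add J1 ((IP 2 1 (by norm_num) (by norm_num)).const_mul 3),
        integral_add (IZ 3 (by norm_num)) ((IP 1 2 (by norm_num) (by norm_num)).const_mul 3),
        MeasureTheory.integral_const_mul]
      simp only [MeasureTheory.integral_const_mul]
      rw [EP 1 2 (by norm_num) (by norm_num), EP 2 1 (by norm_num) (by norm_num),
        ES1', EZ1', EZ 3, IH3]
      ring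
    -- fourth moment
    have M4 : ∫ ω, (∑ i ∈ insert a s, Z i ω) ^ 4 ∂μ
        = (n + 1) * c4 + 3 * (n + 1) * n * c2 ^ 2 := by
      simp_rw [hsum]
      have e : ∀ ω : Ω, (Z a ω + S ω) ^ 4
          = Z a ω ^ 4 + 4 * (S ω ^ 1 * Z a ω ^ 3) + 6 * (S ω ^ 2 * Z a ω ^ 2)
            + 4 * (S ω ^ 3 * Z a ω ^ 1) + S ω ^ 4 := by
        intro ω; ring
      simp_rw [e]
      have J1 : Integrable (fun ω => Z a ω ^ 4 + 4 * (S ω ^ 1 * Z a ω ^ 3)) μ :=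
        (IZ 4 le_rfl).add ((IP 1 3 (by norm_num) (by norm_num)).const_mul 4)
      have J2 : Integrable (fun ω => Z a ω ^ 4 + 4 * (S ω ^ 1 * Z a ω ^ 3)
          + 6 * (S ω ^ 2 * Z a ω ^ 2)) μ :=
        J1.add ((IP 2 2 (by norm_num) (by norm_num)).const_mul 6)
      have J3 : Integrable (fun ω => Z a ω ^ 4 + 4 * (S ω ^ 1 * Z a ω ^ 3)
          + 6 * (S ω ^ 2 * Z a ω ^ 2) + 4 * (S ω ^ 3 * Z a ω ^ 1)) μ :=
        J2.add ((IP 3 1 (by norm_num) (by norm_num)).const_mul 4)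
      rw [integral_add J3 (IS 4 le_rfl),
        integral_add J2 ((IP 3 1 (by norm_num) (by norm_num)).const_mul 4),
        integral_add J1 ((IP 2 2 (by norm_num) (by norm_num)).const_mul 6),
        integral_add (IZ 4 le_rfl) ((IP 1 3 (by norm_num) (by norm_num)).const_mul 4),
        MeasureTheory.integral_const_mul]
      simp only [MeasureTheory.integral_const_mul]
      rw [EP 1 3 (by norm_num) (by norm_num), EP 2 2 (by norm_num) (by norm_num),
        EP 3 1 (by norm_num) (by norm_num),
        ES1', EZ1', EZ 4, EZ 2, IH2, IH4]
      ring
    refine ⟨M1, ?_, ?_, ?_⟩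
    · rw [M2, hcard]
    · rw [M3, hcard]
    · rw [M4, hcard]; ring

lemma SE.arith (M a3 a4 c2 c4 σ3 : ℝ) (hM : M ≠ 0) :
    2 * (a4 / 24 * (((2 * M)⁻¹) ^ 4 * (2 * M * c4 + 3 * (2 * M) * (2 * M - 1) * c2 ^ 2)))
      + (a4 / 24 * ((M⁻¹) ^ 4 * (M * c4 + 3 * M * (M - 1) * c2 ^ 2))) / 2
      + (a4 / 24 * ((M⁻¹) ^ 4 * (M * c4 + 3 * M * (M - 1) * c2 ^ 2))) / 2
      + a3 * σ3 / (12 * M ^ 2)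
    = (4 * a3 * σ3 + 9 * a4 * c2 ^ 2) / (48 * M ^ 2)
      + (5 * a4 / 96) * ((c4 - 3 * c2 ^ 2) / M ^ 3) := by
  field_simp
  ring

lemma SE.int_taylor {Ω : Type*} [MeasurableSpace Ω] {μ : Measure Ω} [IsProbabilityMeasure μ]
    (f : ℝ → ℝ) (hf : ContDiff ℝ 4 f) {C : ℝ} (hC : ∀ x, |iteratedDeriv 4 f x| ≤ C)
    (W : Ω → ℝ) (hW : MemLp W 4 μ) :
    Integrable (fun ω => f (W ω)) μ ∧
    |(∫ ω, f (W ω) ∂μ) - (f 0 + iteratedDeriv 1 f 0 * ∫ ω, W ω ∂μ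
        + iteratedDeriv 2 f 0 * (∫ ω, W ω ^ 2 ∂μ) / 2
        + iteratedDeriv 3 f 0 * (∫ ω, W ω ^ 3 ∂μ) / 6)|
      ≤ C / 24 * ∫ ω, W ω ^ 4 ∂μ := by
  have hC0 : 0 ≤ C := le_trans (abs_nonneg _) (hC 0)
  set c1 := iteratedDeriv 1 f 0 with hc1
  set c2 := iteratedDeriv 2 f 0 with hc2
  set c3 := iteratedDeriv 3 f 0 with hc3
  set P : ℝ → ℝ := fun x => f 0 + c1 * x + c2 * (x ^ 2 / 2) + c3 * (x ^ 3 / 6) with hP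
  have hR : ∀ x : ℝ, |f x - P x| ≤ C / 24 * x ^ 4 := by
    intro x
    have := SE.taylor_bound f hf hC x
    calc |f x - P x| ≤ C * x ^ 4 / 24 := this
      _ = C / 24 * x ^ 4 := by ring
  have IW : ∀ k : ℕ, k ≤ 4 → Integrable (fun ω => W ω ^ k) μ :=
    fun k hk => SE.integrable_pow hW hk
  have IW1 : Integrable W μ := by
    have := IW 1 (by norm_num); simpa using this
  have IPW : Integrable (fun ω => P (W ω)) μ := by
    apply Integrable.add
    apply Integrable.add
    apply Integrable.add
    · exact integrable_const _
    · exact IW1.const_mul c1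
    · exact (Integrable.div_const (IW 2 (by norm_num)) 2).const_mul c2
    · exact (Integrable.div_const (IW 3 (by norm_num)) 6).const_mul c3
  have hmeasR : AEStronglyMeasurable (fun ω => f (W ω) - P (W ω)) μ := by
    have hWm : AEMeasurable W μ := hW.aestronglyMeasurable.aemeasurable
    have hcont : Continuous (fun x => f x - P x) := by
      apply (hf.continuous).sub
      apply Continuous.add
      apply Continuous.add
      apply Continuous.add
      · exact continuous_const
      · exact continuous_const.mul continuous_id
      · exact continuous_const.mul ((continuous_pow 2).div_const 2)
      · exact continuous_const.mul ((continuous_pow 3).div_const 6)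
    exact (hcont.measurable.comp_aemeasurable hWm).aestronglyMeasurable
  have IRW : Integrable (fun ω => f (W ω) - P (W ω)) μ := by
    refine Integrable.mono' ((IW 4 le_rfl).const_mul (C / 24)) hmeasR ?_
    exact Filter.Eventually.of_forall fun ω => by simpa using hR (W ω)
  have IfW : Integrable (fun ω => f (W ω)) μ := by
    have := IRW.add IPW
    refine this.congr (Filter.Eventually.of_forall fun ω => ?_)
    simp
  refine ⟨IfW, ?_⟩
  have hsplit : ∫ ω, f (W ω) ∂μ = (∫ ω, (f (W ω) - P (W ω)) ∂μ) + ∫ ω, P (W ω) ∂μ := by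
    rw [← integral_add IRW IPW]
    congr 1
    funext ω
    ring
  have hPint : ∫ ω, P (W ω) ∂μ = f 0 + c1 * ∫ ω, W ω ∂μ
      + c2 * (∫ ω, W ω ^ 2 ∂μ) / 2 + c3 * (∫ ω, W ω ^ 3 ∂μ) / 6 := by
    have e : ∀ ω : Ω, P (W ω) = f 0 + c1 * W ω + c2 / 2 * W ω ^ 2 + c3 / 6 * W ω ^ 3 := by
      intro ω; simp only [hP]; ring
    simp_rw [e]
    have J1 : Integrable (fun ω => f 0 + c1 * W ω) μ := (integrable_const _).add (IW1.const_mul c1)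
    have J2 : Integrable (fun ω => f 0 + c1 * W ω + c2 / 2 * W ω ^ 2) μ :=
      J1.add ((IW 2 (by norm_num)).const_mul (c2 / 2))
    rw [integral_add J2 ((IW 3 (by norm_num)).const_mul (c3 / 6)),
      integral_add J1 ((IW 2 (by norm_num)).const_mul (c2 / 2)),
      integral_add (integrable_const _) (IW1.const_mul c1)]
    simp only [MeasureTheory.integral_const_mul, MeasureTheory.integral_const, measure_univ, probReal_univ,
      ENNReal.toReal_one, smul_eq_mul, one_mul]
    ring
  rw [hsplit, hPint]
  have : |∫ ω, (f (W ω) - P (W ω)) ∂μ| ≤ C / 24 * ∫ ω, W ω ^ 4 ∂μ := by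
    calc |∫ ω, (f (W ω) - P (W ω)) ∂μ| ≤ ∫ ω, |f (W ω) - P (W ω)| ∂μ := by
          simpa using norm_integral_le_integral_norm (μ := μ) (fun ω => f (W ω) - P (W ω))
      _ ≤ ∫ ω, C / 24 * W ω ^ 4 ∂μ := by
          refine integral_mono IRW.abs ((IW 4 le_rfl).const_mul _) ?_
          intro ω
          exact hR (W ω)
      _ = C / 24 * ∫ ω, W ω ^ 4 ∂μ := MeasureTheory.integral_const_mul _ _
  calc |∫ ω, (f (W ω) - P (W ω)) ∂μ + (f 0 + c1 * ∫ ω, W ω ∂μ + c2 * (∫ ω, W ω ^ 2 ∂μ) / 2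
        + c3 * (∫ ω, W ω ^ 3 ∂μ) / 6)
      - (f 0 + c1 * ∫ ω, W ω ∂μ + c2 * (∫ ω, W ω ^ 2 ∂μ) / 2 + c3 * (∫ ω, W ω ^ 3 ∂μ) / 6)|
      = |∫ ω, (f (W ω) - P (W ω)) ∂μ| := by rw [add_sub_cancel_right]
    _ ≤ C / 24 * ∫ ω, W ω ^ 4 ∂μ := this

end SEhelpers

/-- **Second-order extrapolation guarantee** (Proposition `2nd_error`).
Let `q : ℝ → ℝ` be `C⁴` with `|q'''| ≤ a₃` and `|q⁗| ≤ a₄`.  Let `δ̄₁, δ̄₂` be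
independent averages of `m` i.i.d. samples from a distribution with mean `h` and
central moments `σ₂, σ₃, σ₄`.  Then for every `s`,
`|E[2 q(s + (δ̄₁+δ̄₂)/2) - (q(s+δ̄₁)+q(s+δ̄₂))/2] - q(s+h)|
  ≤ (4a₃σ₃ + 9a₄σ₂²)/(48m²) + (5a₄/96)·(σ₄ - 3σ₂²)/m³`. -/
theorem stmt_3
    {Ω : Type*} [MeasurableSpace Ω] (μ : Measure Ω) [IsProbabilityMeasure μ]
    (m : ℕ) (hm : 0 < m)
    (q : ℝ → ℝ) (a3 a4 : ℝ)
    (hq : ContDiff ℝ 4 q)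
    (ha3 : ∀ x : ℝ, |iteratedDeriv 3 q x| ≤ a3)
    (ha4 : ∀ x : ℝ, |iteratedDeriv 4 q x| ≤ a4)
    (X : Fin 2 → Fin m → Ω → ℝ) (X0 : Ω → ℝ)
    (hmeas : ∀ j i, Measurable (X j i)) (hmeas0 : Measurable X0)
    (hindep : iIndepFun (fun p : Fin 2 × Fin m => X p.1 p.2) μ)
    (hident : ∀ j i, IdentDistrib (X j i) X0 μ μ)
    (hL4 : MemLp X0 4 μ)
    (h σ2 σ3 σ4 : ℝ)
    (hh : h = ∫ ω, X0 ω ∂μ)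
    (hσ2 : σ2 = |∫ ω, (X0 ω - h) ^ 2 ∂μ|)
    (hσ3 : σ3 = |∫ ω, (X0 ω - h) ^ 3 ∂μ|)
    (hσ4 : σ4 = ∫ ω, (X0 ω - h) ^ 4 ∂μ)
    -- the two sample averages `δ̄₁, δ̄₂`
    (A : Fin 2 → Ω → ℝ)
    (hA : ∀ j ω, A j ω = (m : ℝ)⁻¹ * ∑ i, X j i ω) :
    ∀ s : ℝ,
      |(∫ ω, (2 * q (s + (A 0 ω + A 1 ω) / 2) - (q (s + A 0 ω) + q (s + A 1 ω)) / 2) ∂μ)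
          - q (s + h)|
        ≤ (4 * a3 * σ3 + 9 * a4 * σ2 ^ 2) / (48 * (m : ℝ) ^ 2)
          + (5 * a4 / 96) * ((σ4 - 3 * σ2 ^ 2) / (m : ℝ) ^ 3) := by
  intro s
  have hm' : ((m : ℝ)) ≠ 0 := Nat.cast_ne_zero.mpr hm.ne'
  have hmpos : (0:ℝ) < m := by exact_mod_cast hm
  -- centered variables
  set Z : Fin 2 × Fin m → Ω → ℝ := fun p ω => X p.1 p.2 ω - h with hZdef
  have hZmeas : ∀ p, Measurable (Z p) := fun p => (hmeas p.1 p.2).sub measurable_const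
  have hZindep : iIndepFun Z μ :=
    hindep.comp (fun _ => fun x : ℝ => x - h) (fun _ => measurable_id.sub measurable_const)
  have hZ0mem : MemLp (fun ω => X0 ω - h) 4 μ := hL4.sub (memLp_const h)
  have hZident : ∀ p, IdentDistrib (Z p) (fun ω => X0 ω - h) μ μ :=
    fun p => (hident p.1 p.2).comp (measurable_id.sub measurable_const)
  have hX0int : Integrable X0 μ := hL4.integrable (by norm_num)
  have hmean0 : ∫ ω, (X0 ω - h) ∂μ = 0 := by
    rw [integral_sub hX0int (integrable_const h), MeasureTheory.integral_const]
    simp [hh]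
  -- abbreviations for the central moments
  set c2 : ℝ := ∫ ω, (X0 ω - h) ^ 2 ∂μ with hc2def
  set c3 : ℝ := ∫ ω, (X0 ω - h) ^ 3 ∂μ with hc3def
  set c4 : ℝ := ∫ ω, (X0 ω - h) ^ 4 ∂μ with hc4def
  have hσ2' : σ2 = c2 := by
    rw [hσ2, abs_of_nonneg]
    exact integral_nonneg fun ω => by positivity
  have hσ3' : σ3 = |c3| := hσ3
  have hσ4' : σ4 = c4 := hσ4
  have hc3abs : |c3| = σ3 := hσ3'.symm
  -- the sums
  set SS : Fin 2 → Ω → ℝ := fun j ω => ∑ i, Z (j, i) ω with hSSdef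
  set ST : Ω → ℝ := fun ω => ∑ p : Fin 2 × Fin m, Z p ω with hSTdef
  set WW : Fin 2 → Ω → ℝ := fun j ω => (m : ℝ)⁻¹ * SS j ω with hWWdef
  set WT : Ω → ℝ := fun ω => (2 * (m : ℝ))⁻¹ * ST ω with hWTdef
  have hZpmem : ∀ p, MemLp (Z p) 4 μ := fun p => (hZident p).symm.memLp_snd hZ0mem
  have hSSmem : ∀ j, MemLp (SS j) 4 μ :=
    fun j => memLp_finset_sum Finset.univ (fun i _ => hZpmem (j, i))
  have hSTmem : MemLp ST 4 μ := memLp_finset_sum Finset.univ (fun p _ => hZpmem p)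
  have hWWmem : ∀ j, MemLp (WW j) 4 μ := fun j => (hSSmem j).const_mul _
  have hWTmem : MemLp WT 4 μ := hSTmem.const_mul _
  -- moments of the sums
  have mS : ∀ j : Fin 2, (∫ ω, SS j ω ∂μ = 0) ∧ (∫ ω, SS j ω ^ 2 ∂μ = m * c2)
      ∧ (∫ ω, SS j ω ^ 3 ∂μ = m * c3)
      ∧ (∫ ω, SS j ω ^ 4 ∂μ = m * c4 + 3 * m * ((m : ℝ) - 1) * c2 ^ 2) := by
    intro j
    have hmom := SE.moments Z (fun ω => X0 ω - h) hZmeas hZindep hZident hZ0mem hmean0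
      ({j} ×ˢ (Finset.univ : Finset (Fin m)))
    have hcard : ((({j} ×ˢ (Finset.univ : Finset (Fin m))).card : ℕ) : ℝ) = (m : ℝ) := by
      simp
    simp only [Finset.sum_product, Finset.sum_singleton, hcard] at hmom
    exact hmom
  have mT : (∫ ω, ST ω ∂μ = 0) ∧ (∫ ω, ST ω ^ 2 ∂μ = 2 * m * c2)
      ∧ (∫ ω, ST ω ^ 3 ∂μ = 2 * m * c3)
      ∧ (∫ ω, ST ω ^ 4 ∂μ = 2 * m * c4 + 3 * (2 * m) * (2 * (m : ℝ) - 1) * c2 ^ 2) := by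
    have hmom := SE.moments Z (fun ω => X0 ω - h) hZmeas hZindep hZident hZ0mem hmean0
      (Finset.univ : Finset (Fin 2 × Fin m))
    have hcard : (((Finset.univ : Finset (Fin 2 × Fin m)).card : ℕ) : ℝ) = 2 * (m : ℝ) := by
      simp [Finset.card_univ]
    simp only [hcard] at hmom
    exact hmom
  -- moments of the scaled averages
  have MW : ∀ (κ : ℝ) (S : Ω → ℝ) (k : ℕ),
      ∫ ω, (κ * S ω) ^ k ∂μ = κ ^ k * ∫ ω, S ω ^ k ∂μ := by
    intro κ S k
    simp_rw [mul_pow]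
    exact MeasureTheory.integral_const_mul _ _
  have ET1 : ∫ ω, WT ω ∂μ = 0 := by
    rw [hWTdef]
    simp only []
    rw [MeasureTheory.integral_const_mul, mT.1, mul_zero]
  have ET2 : ∫ ω, WT ω ^ 2 ∂μ = ((2 * (m : ℝ))⁻¹) ^ 2 * (2 * m * c2) := by
    rw [hWTdef]; simp only []; rw [MW, mT.2.1]
  have ET3 : ∫ ω, WT ω ^ 3 ∂μ = ((2 * (m : ℝ))⁻¹) ^ 3 * (2 * m * c3) := by
    rw [hWTdef]; simp only []; rw [MW, mT.2.2.1]
  have ET4 : ∫ ω, WT ω ^ 4 ∂μ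
      = ((2 * (m : ℝ))⁻¹) ^ 4 * (2 * m * c4 + 3 * (2 * m) * (2 * (m : ℝ) - 1) * c2 ^ 2) := by
    rw [hWTdef]; simp only []; rw [MW, mT.2.2.2]
  have EW1 : ∀ j, ∫ ω, WW j ω ∂μ = 0 := by
    intro j
    rw [hWWdef]; simp only []
    rw [MeasureTheory.integral_const_mul, (mS j).1, mul_zero]
  have EW2 : ∀ j, ∫ ω, WW j ω ^ 2 ∂μ = ((m : ℝ)⁻¹) ^ 2 * (m * c2) := by
    intro j; rw [hWWdef]; simp only []; rw [MW, (mS j).2.1]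
  have EW3 : ∀ j, ∫ ω, WW j ω ^ 3 ∂μ = ((m : ℝ)⁻¹) ^ 3 * (m * c3) := by
    intro j; rw [hWWdef]; simp only []; rw [MW, (mS j).2.2.1]
  have EW4 : ∀ j, ∫ ω, WW j ω ^ 4 ∂μ
      = ((m : ℝ)⁻¹) ^ 4 * (m * c4 + 3 * m * ((m : ℝ) - 1) * c2 ^ 2) := by
    intro j; rw [hWWdef]; simp only []; rw [MW, (mS j).2.2.2]
  -- Taylor bounds
  have ha4f : ∀ x, |iteratedDeriv 4 (fun t => q (s + h + t)) x| ≤ a4 := by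
    intro x
    rw [iteratedDeriv_comp_const_add]
    exact ha4 _
  have hfc : ContDiff ℝ 4 (fun t => q (s + h + t)) :=
    hq.comp (contDiff_const.add contDiff_id)
  obtain ⟨ITT, hTT⟩ := SE.int_taylor (fun t => q (s + h + t)) hfc ha4f WT hWTmem
  obtain ⟨IT0, hT0⟩ := SE.int_taylor (fun t => q (s + h + t)) hfc ha4f (WW 0) (hWWmem 0)
  obtain ⟨IT1, hT1⟩ := SE.int_taylor (fun t => q (s + h + t)) hfc ha4f (WW 1) (hWWmem 1)
  simp only [iteratedDeriv_comp_const_add, add_zero] at hTT hT0 hT1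
  rw [ET1, ET2, ET3, ET4] at hTT
  rw [EW1 0, EW2 0, EW3 0, EW4 0] at hT0
  rw [EW1 1, EW2 1, EW3 1, EW4 1] at hT1
  -- identify the integrands
  have eT : ∀ ω, s + (A 0 ω + A 1 ω) / 2 = s + h + WT ω := by
    intro ω
    rw [hA 0, hA 1, hWTdef]
    simp only [hSTdef, hZdef]
    rw [Fintype.sum_prod_type, Fin.sum_univ_two]
    rw [Finset.sum_sub_distrib, Finset.sum_sub_distrib, Finset.sum_const, Finset.card_univ,
      Fintype.card_fin, nsmul_eq_mul]
    field_simp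
    ring
  have eW : ∀ (j : Fin 2) ω, s + A j ω = s + h + WW j ω := by
    intro j ω
    rw [hA j, hWWdef]
    simp only [hSSdef, hZdef]
    rw [Finset.sum_sub_distrib, Finset.sum_const, Finset.card_univ, Fintype.card_fin,
      nsmul_eq_mul]
    field_simp
    ring
  have hsplit : ∫ ω, (2 * q (s + (A 0 ω + A 1 ω) / 2)
        - (q (s + A 0 ω) + q (s + A 1 ω)) / 2) ∂μ
      = 2 * (∫ ω, q (s + h + WT ω) ∂μ)
        - ((∫ ω, q (s + h + WW 0 ω) ∂μ) + (∫ ω, q (s + h + WW 1 ω) ∂μ)) / 2 := by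
    simp_rw [eT, eW]
    have Iadd : Integrable (fun ω => q (s + h + WW 0 ω) + q (s + h + WW 1 ω)) μ := IT0.add IT1
    have Ihalf : Integrable (fun ω => (q (s + h + WW 0 ω) + q (s + h + WW 1 ω)) / 2) μ :=
      Iadd.div_const 2
    have I2 : Integrable (fun ω => 2 * q (s + h + WT ω)) μ := ITT.const_mul 2
    rw [integral_sub I2 Ihalf, MeasureTheory.integral_const_mul, MeasureTheory.integral_div,
      integral_add IT0 IT1]
  rw [hsplit]
  -- main estimate
  set ET : ℝ := ∫ ω, q (s + h + WT ω) ∂μ with hETdef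
  set E0 : ℝ := ∫ ω, q (s + h + WW 0 ω) ∂μ with hE0def
  set E1 : ℝ := ∫ ω, q (s + h + WW 1 ω) ∂μ with hE1def
  set d1 : ℝ := iteratedDeriv 1 q (s + h)
  set d2 : ℝ := iteratedDeriv 2 q (s + h)
  set d3 : ℝ := iteratedDeriv 3 q (s + h)
  set vT2 : ℝ := ((2 * (m : ℝ))⁻¹) ^ 2 * (2 * m * c2) with hvT2
  set vT3 : ℝ := ((2 * (m : ℝ))⁻¹) ^ 3 * (2 * m * c3) with hvT3
  set vT4 : ℝ := ((2 * (m : ℝ))⁻¹) ^ 4 * (2 * m * c4 + 3 * (2 * m) * (2 * (m : ℝ) - 1) * c2 ^ 2)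
    with hvT4
  set v2 : ℝ := ((m : ℝ)⁻¹) ^ 2 * (m * c2) with hv2
  set v3 : ℝ := ((m : ℝ)⁻¹) ^ 3 * (m * c3) with hv3
  set v4 : ℝ := ((m : ℝ)⁻¹) ^ 4 * (m * c4 + 3 * m * ((m : ℝ) - 1) * c2 ^ 2) with hv4
  set PT : ℝ := q (s + h) + d1 * 0 + d2 * vT2 / 2 + d3 * vT3 / 6 with hPT
  set P0 : ℝ := q (s + h) + d1 * 0 + d2 * v2 / 2 + d3 * v3 / 6 with hP0
  have hTT' : |ET - PT| ≤ a4 / 24 * vT4 := hTT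
  have hT0' : |E0 - P0| ≤ a4 / 24 * v4 := hT0
  have hT1' : |E1 - P0| ≤ a4 / 24 * v4 := hT1
  have deco : 2 * ET - (E0 + E1) / 2 - q (s + h)
      = 2 * (ET - PT) - (E0 - P0) / 2 - (E1 - P0) / 2 - d3 * c3 / (12 * (m : ℝ) ^ 2) := by
    have hB : 2 * PT - (P0 + P0) / 2 - q (s + h) = -(d3 * c3 / (12 * (m : ℝ) ^ 2)) := by
      rw [hPT, hP0, hvT2, hvT3, hv2, hv3]
      field_simp
      ring
    linarith [hB]
  have habs : |2 * ET - (E0 + E1) / 2 - q (s + h)|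
      ≤ 2 * |ET - PT| + |E0 - P0| / 2 + |E1 - P0| / 2 + |d3 * c3| / (12 * (m : ℝ) ^ 2) := by
    rw [deco]
    have h1 : |2 * (ET - PT) - (E0 - P0) / 2 - (E1 - P0) / 2 - d3 * c3 / (12 * (m : ℝ) ^ 2)|
        ≤ |2 * (ET - PT) - (E0 - P0) / 2 - (E1 - P0) / 2| + |d3 * c3 / (12 * (m : ℝ) ^ 2)| :=
      abs_sub _ _
    have h2 : |2 * (ET - PT) - (E0 - P0) / 2 - (E1 - P0) / 2|
        ≤ |2 * (ET - PT) - (E0 - P0) / 2| + |(E1 - P0) / 2| := abs_sub _ _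
    have h3 : |2 * (ET - PT) - (E0 - P0) / 2| ≤ |2 * (ET - PT)| + |(E0 - P0) / 2| := abs_sub _ _
    have e1 : |2 * (ET - PT)| = 2 * |ET - PT| := by rw [abs_mul]; norm_num
    have e2 : |(E0 - P0) / 2| = |E0 - P0| / 2 := by rw [abs_div]; norm_num
    have e3 : |(E1 - P0) / 2| = |E1 - P0| / 2 := by rw [abs_div]; norm_num
    have e4 : |d3 * c3 / (12 * (m : ℝ) ^ 2)| = |d3 * c3| / (12 * (m : ℝ) ^ 2) := by
      rw [abs_div, abs_of_nonneg (by positivity : (0:ℝ) ≤ 12 * (m : ℝ) ^ 2)]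
    linarith [h1, h2, h3, e1.le, e2.le, e3.le, e4.le, e1.ge, e2.ge, e3.ge, e4.ge]
  have hσ3nn : 0 ≤ σ3 := by rw [hσ3]; exact abs_nonneg _
  have hd3c3 : |d3 * c3| ≤ a3 * σ3 := by
    rw [abs_mul, hc3abs]
    exact mul_le_mul_of_nonneg_right (ha3 _) hσ3nn
  have ha4nn : 0 ≤ a4 := le_trans (abs_nonneg _) (ha4 0)
  calc |2 * ET - (E0 + E1) / 2 - q (s + h)|
      ≤ 2 * |ET - PT| + |E0 - P0| / 2 + |E1 - P0| / 2 + |d3 * c3| / (12 * (m : ℝ) ^ 2) := habs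
    _ ≤ 2 * (a4 / 24 * vT4) + (a4 / 24 * v4) / 2 + (a4 / 24 * v4) / 2
        + a3 * σ3 / (12 * (m : ℝ) ^ 2) := by
        have b1 : |ET - PT| ≤ a4 / 24 * vT4 := hTT'
        have b2 : |E0 - P0| ≤ a4 / 24 * v4 := hT0'
        have b3 : |E1 - P0| ≤ a4 / 24 * v4 := hT1'
        have b4 : |d3 * c3| / (12 * (m : ℝ) ^ 2) ≤ a3 * σ3 / (12 * (m : ℝ) ^ 2) :=
          div_le_div_of_nonneg_right hd3c3 (by positivity)
        linarith [b1, b2, b3, b4]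
    _ = (4 * a3 * σ3 + 9 * a4 * σ2 ^ 2) / (48 * (m : ℝ) ^ 2)
        + (5 * a4 / 96) * ((σ4 - 3 * σ2 ^ 2) / (m : ℝ) ^ 3) := by
        rw [hvT4, hv4, hσ2', hσ4']
        exact SE.arith (m : ℝ) a3 a4 c2 c4 σ3 hm'
end

section
/- Let q : ℝ^p → ℝ^ℓ be four times continuously differentiable and let D be a distribution on ℝ^p, with D_{m'} denoting the distribution of the average of m' i.i.d. samples from D. Suppose there exist V, C ≥ 0 such that for m' ∈ {m, 2m} and δ̄ ~ D_{m'}, E[‖q(s + δ̄) − E[q(s + δ̄)]‖_2^2] ≤ V^2/m' + C. Then for δ̄_1, δ̄_2 independent ~ D_m and L^{(2)}_{D_m} q(s) = 2 q(s + (δ̄_1 + δ̄_2)/2) − (q(s + δ̄_1) + q(s + δ̄_2))/2, one has E[‖L^{(2)}_{D_m} q(s) − E[L^{(2)}_{D_m} q(s)]‖_2^2] ≤ 14 (V^2/m + C). -/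
open MeasureTheory ProbabilityTheory

lemma sq_norm_bound {E : Type*} [NormedAddCommGroup E] [NormedSpace ℝ E] (a b c : E) :
    ‖(2 : ℝ) • a - (2 : ℝ)⁻¹ • (b + c)‖ ^ 2
      ≤ 12 * ‖a‖ ^ 2 + (3/4) * ‖b‖ ^ 2 + (3/4) * ‖c‖ ^ 2 := by
  have h : ‖(2 : ℝ) • a - (2 : ℝ)⁻¹ • (b + c)‖ ≤ 2 * ‖a‖ + 2⁻¹ * ‖b‖ + 2⁻¹ * ‖c‖ := by
    calc ‖(2 : ℝ) • a - (2 : ℝ)⁻¹ • (b + c)‖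
        ≤ ‖(2 : ℝ) • a‖ + ‖(2 : ℝ)⁻¹ • (b + c)‖ := norm_sub_le _ _
      _ ≤ 2 * ‖a‖ + 2⁻¹ * (‖b‖ + ‖c‖) := by
          rw [norm_smul, norm_smul]
          simp only [Real.norm_ofNat, norm_inv]
          gcongr
          exact norm_add_le _ _
      _ = 2 * ‖a‖ + 2⁻¹ * ‖b‖ + 2⁻¹ * ‖c‖ := by ring
  have h2 := pow_le_pow_left₀ (norm_nonneg _) h 2
  nlinarith [h2, sq_nonneg (2 * ‖a‖ - 2⁻¹ * ‖b‖), sq_nonneg (2 * ‖a‖ - 2⁻¹ * ‖c‖),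
    sq_nonneg (2⁻¹ * ‖b‖ - 2⁻¹ * ‖c‖)]


open MeasureTheory ProbabilityTheory

/-- **Variance bound for the second-order extrapolation** (Lemma `extrapolation:variance`).
Let `q : ℝ^p → ℝ^ℓ` be `C⁴` and let `D_{m'}` denote the distribution of the average of
`m'` i.i.d. samples from `D`.  If `E[‖q(s+δ̄) - E[q(s+δ̄)]‖²] ≤ V²/m' + C` for
`m' ∈ {m, 2m}` (with `δ̄ ~ D_{m'}`), then the second-order extrapolation
`L²_{D_m} q(s) = 2 q(s + (δ̄₁+δ̄₂)/2) - (q(s+δ̄₁)+q(s+δ̄₂))/2` (`δ̄₁, δ̄₂` independent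
`~ D_m`) satisfies `E[‖L²_{D_m} q(s) - E[L²_{D_m} q(s)]‖²] ≤ 14 (V²/m + C)`. -/
theorem stmt_5
    (p l : ℕ)
    {Ω : Type*} [MeasurableSpace Ω] (μ : Measure Ω) [IsProbabilityMeasure μ]
    (m : ℕ) (hm : 0 < m)
    (q : EuclideanSpace ℝ (Fin p) → EuclideanSpace ℝ (Fin l))
    (hq : ContDiff ℝ 4 q)
    (X : Fin 2 → Fin m → Ω → EuclideanSpace ℝ (Fin p))
    (X0 : Ω → EuclideanSpace ℝ (Fin p))
    (hmeas : ∀ j i, Measurable (X j i)) (hmeas0 : Measurable X0)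
    (hindep : iIndepFun (fun r : Fin 2 × Fin m => X r.1 r.2) μ)
    (hident : ∀ j i, IdentDistrib (X j i) X0 μ μ)
    (s : EuclideanSpace ℝ (Fin p)) (V C : ℝ) (hV : 0 ≤ V) (hC : 0 ≤ C)
    -- the two sample averages `δ̄₁, δ̄₂ ~ D_m`
    (A : Fin 2 → Ω → EuclideanSpace ℝ (Fin p))
    (hA : ∀ j ω, A j ω = (m : ℝ)⁻¹ • ∑ i, X j i ω)
    -- square-integrability of the evaluations of `q`
    (hmem : ∀ j, MemLp (fun ω => q (s + A j ω)) 2 μ)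
    (hmem2 : MemLp (fun ω => q (s + (2 : ℝ)⁻¹ • (A 0 ω + A 1 ω))) 2 μ)
    -- variance hypothesis at batch size `m` (i.e. `δ̄ ~ D_m`) …
    (hvar1 : ∀ j, ∫ ω, ‖q (s + A j ω) - ∫ ω', q (s + A j ω') ∂μ‖ ^ 2 ∂μ ≤ V ^ 2 / m + C)
    -- … and at batch size `2m` (the average `(δ̄₁+δ̄₂)/2` is distributed as `D_{2m}`)
    (hvar2 : ∫ ω, ‖q (s + (2 : ℝ)⁻¹ • (A 0 ω + A 1 ω))
                    - ∫ ω', q (s + (2 : ℝ)⁻¹ • (A 0 ω' + A 1 ω')) ∂μ‖ ^ 2 ∂μ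
              ≤ V ^ 2 / (2 * m) + C)
    -- the second-order extrapolation
    (L : Ω → EuclideanSpace ℝ (Fin l))
    (hL : ∀ ω, L ω = (2 : ℝ) • q (s + (2 : ℝ)⁻¹ • (A 0 ω + A 1 ω))
                      - (2 : ℝ)⁻¹ • (q (s + A 0 ω) + q (s + A 1 ω))) :
    ∫ ω, ‖L ω - ∫ ω', L ω' ∂μ‖ ^ 2 ∂μ ≤ 14 * (V ^ 2 / m + C) := by
  set g : Ω → EuclideanSpace ℝ (Fin l) := fun ω => q (s + (2 : ℝ)⁻¹ • (A 0 ω + A 1 ω)) with hg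
  set h0 : Ω → EuclideanSpace ℝ (Fin l) := fun ω => q (s + A 0 ω) with hh0
  set h1 : Ω → EuclideanSpace ℝ (Fin l) := fun ω => q (s + A 1 ω) with hh1
  have hgi : Integrable g μ := hmem2.integrable one_le_two
  have hi0 : Integrable h0 μ := (hmem 0).integrable one_le_two
  have hi1 : Integrable h1 μ := (hmem 1).integrable one_le_two
  have hLeq : L = fun ω => (2 : ℝ) • g ω - (2 : ℝ)⁻¹ • (h0 ω + h1 ω) := funext hL
  -- integral of L
  have hIL : ∫ ω, L ω ∂μ
      = (2 : ℝ) • (∫ ω, g ω ∂μ) - (2 : ℝ)⁻¹ • ((∫ ω, h0 ω ∂μ) + (∫ ω, h1 ω ∂μ)) := by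
    have haux : ∫ ω, ((2 : ℝ) • g ω - (2 : ℝ)⁻¹ • (h0 ω + h1 ω)) ∂μ
        = (2 : ℝ) • (∫ ω, g ω ∂μ) - (2 : ℝ)⁻¹ • ((∫ ω, h0 ω ∂μ) + (∫ ω, h1 ω ∂μ)) := by
      have i1 : Integrable (fun ω => (2 : ℝ) • g ω) μ := hgi.smul (2 : ℝ)
      have i2 : Integrable (fun ω => (2 : ℝ)⁻¹ • (h0 ω + h1 ω)) μ := (hi0.add hi1).smul ((2 : ℝ)⁻¹)
      rw [integral_sub i1 i2, integral_smul, integral_smul, integral_add hi0 hi1]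
    rw [hLeq]; exact haux
  -- pointwise bound after recentring
  have key : ∀ ω, ‖L ω - ∫ ω', L ω' ∂μ‖ ^ 2
      ≤ 12 * ‖g ω - ∫ ω', g ω' ∂μ‖ ^ 2 + (3/4) * ‖h0 ω - ∫ ω', h0 ω' ∂μ‖ ^ 2
        + (3/4) * ‖h1 ω - ∫ ω', h1 ω' ∂μ‖ ^ 2 := by
    intro ω
    have : L ω - ∫ ω', L ω' ∂μ
        = (2 : ℝ) • (g ω - ∫ ω', g ω' ∂μ)
          - (2 : ℝ)⁻¹ • ((h0 ω - ∫ ω', h0 ω' ∂μ) + (h1 ω - ∫ ω', h1 ω' ∂μ)) := by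
      rw [hIL, hLeq]
      simp only [smul_sub, smul_add]
      abel
    rw [this]
    exact sq_norm_bound _ _ _
  -- integrability of the squared norms
  have hint : ∀ (f : Ω → EuclideanSpace ℝ (Fin l)), MemLp f 2 μ →
      Integrable (fun ω => ‖f ω - ∫ ω', f ω' ∂μ‖ ^ 2) μ := by
    intro f hf
    have := hf.sub (memLp_const (∫ ω', f ω' ∂μ))
    exact (memLp_two_iff_integrable_sq_norm this.aestronglyMeasurable).mp this
  have hmemL : MemLp L 2 μ := by
    rw [hLeq]
    exact (hmem2.const_smul (2 : ℝ)).sub (((hmem 0).add (hmem 1)).const_smul ((2 : ℝ)⁻¹))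
  have hintL := hint L hmemL
  have hintg := hint g hmem2
  have hint0 := hint h0 (hmem 0)
  have hint1 := hint h1 (hmem 1)
  have step : ∫ ω, ‖L ω - ∫ ω', L ω' ∂μ‖ ^ 2 ∂μ
      ≤ 12 * (∫ ω, ‖g ω - ∫ ω', g ω' ∂μ‖ ^ 2 ∂μ)
        + (3/4) * (∫ ω, ‖h0 ω - ∫ ω', h0 ω' ∂μ‖ ^ 2 ∂μ)
        + (3/4) * (∫ ω, ‖h1 ω - ∫ ω', h1 ω' ∂μ‖ ^ 2 ∂μ) := by
    have hRI : Integrable (fun ω => 12 * ‖g ω - ∫ ω', g ω' ∂μ‖ ^ 2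
        + (3/4) * ‖h0 ω - ∫ ω', h0 ω' ∂μ‖ ^ 2 + (3/4) * ‖h1 ω - ∫ ω', h1 ω' ∂μ‖ ^ 2) μ := by
      exact ((hintg.const_mul 12).add (hint0.const_mul (3/4))).add (hint1.const_mul (3/4))
    have hmono := integral_mono hintL hRI key
    have hsum : ∫ ω, (12 * ‖g ω - ∫ ω', g ω' ∂μ‖ ^ 2
        + (3/4) * ‖h0 ω - ∫ ω', h0 ω' ∂μ‖ ^ 2 + (3/4) * ‖h1 ω - ∫ ω', h1 ω' ∂μ‖ ^ 2) ∂μ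
        = 12 * (∫ ω, ‖g ω - ∫ ω', g ω' ∂μ‖ ^ 2 ∂μ)
          + (3/4) * (∫ ω, ‖h0 ω - ∫ ω', h0 ω' ∂μ‖ ^ 2 ∂μ)
          + (3/4) * (∫ ω, ‖h1 ω - ∫ ω', h1 ω' ∂μ‖ ^ 2 ∂μ) := by
      have e2 : ∫ ω, (12 * ‖g ω - ∫ ω', g ω' ∂μ‖ ^ 2
            + (3/4) * ‖h0 ω - ∫ ω', h0 ω' ∂μ‖ ^ 2) ∂μ
          = (∫ ω, 12 * ‖g ω - ∫ ω', g ω' ∂μ‖ ^ 2 ∂μ)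
            + ∫ ω, (3/4) * ‖h0 ω - ∫ ω', h0 ω' ∂μ‖ ^ 2 ∂μ :=
        integral_add (hintg.const_mul 12) (hint0.const_mul (3/4))
      have e3 : ∫ ω, ((12 * ‖g ω - ∫ ω', g ω' ∂μ‖ ^ 2
            + (3/4) * ‖h0 ω - ∫ ω', h0 ω' ∂μ‖ ^ 2) + (3/4) * ‖h1 ω - ∫ ω', h1 ω' ∂μ‖ ^ 2) ∂μ
          = (∫ ω, (12 * ‖g ω - ∫ ω', g ω' ∂μ‖ ^ 2 + (3/4) * ‖h0 ω - ∫ ω', h0 ω' ∂μ‖ ^ 2) ∂μ)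
            + ∫ ω, (3/4) * ‖h1 ω - ∫ ω', h1 ω' ∂μ‖ ^ 2 ∂μ :=
        integral_add ((hintg.const_mul 12).add (hint0.const_mul (3/4))) (hint1.const_mul (3/4))
      rw [e3, e2, integral_const_mul, integral_const_mul, integral_const_mul]
    linarith [hsum ▸ hmono]
  have hm' : (0 : ℝ) < m := by exact_mod_cast hm
  have hVg := hvar2
  have hV0 := hvar1 0
  have hV1 := hvar1 1
  have hnn : 0 ≤ V ^ 2 / m := by positivity
  have h2m : V ^ 2 / (2 * m) = (V ^ 2 / m) / 2 := by
    rw [mul_comm, ← div_div]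
  have hg2 : ∫ ω, ‖g ω - ∫ ω', g ω' ∂μ‖ ^ 2 ∂μ ≤ V ^ 2 / (2 * m) + C := hvar2
  linarith [step, hg2, hV0, hV1]
end

section
/- Consider random iterates x^{t+1} = x^t − γ G^{t+1} in ℝ^d, t = 0, …, T−1, and a per-index staleness process over indices j ∈ {1, …, n} defined by φ_j^0 = x^0 and: at each time t ≥ 1, independently with probability p_out set φ_j^t = x^{t−1} for all j (large batch); otherwise a uniformly random subset of B_2 indices is selected and φ_j^t = x^{t−1} for each selected j while φ_j^t = φ_j^{t−1} for unselected j. Define Ξ^t := (1/n) Σ_{j=1}^n ‖x^t − φ_j^t‖_2^2 (so Ξ^0 = 0). Then (1/T) Σ_{t=0}^{T−1} E[Ξ^t] ≤ (6 n^2 / B_2^2) γ^2 (1/T) Σ_{t=0}^{T−1} E[‖G^{t+1}‖_2^2]. -/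
open MeasureTheory ProbabilityTheory Finset

set_option maxHeartbeats 1000000

lemma aux_indepFun {Ω β γ : Type*} {m1 m2 : MeasurableSpace Ω} {_mΩ : MeasurableSpace Ω}
    [mβ : MeasurableSpace β] [mγ : MeasurableSpace γ] {μ : Measure Ω}
    (h : Indep m1 m2 μ) {f : Ω → β} {g : Ω → γ}
    (hf : Measurable[m1] f) (hg : Measurable[m2] g) :
    IndepFun f g μ :=
  fun t1 t2 ht1 ht2 => h t1 t2 (hf.comap_le _ ht1) (hg.comap_le _ ht2)

lemma aux_measure_finset {α : Type*} [MeasurableSpace α] [MeasurableSingletonClass α]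
    (μ : Measure α) (s : Finset α) : μ ↑s = ∑ v ∈ s, μ {v} := by
  rw [show (↑s : Set α) = ⋃ v ∈ s, {v} by ext a; simp]
  exact measure_biUnion_finset (fun i _ j _ hij => by simp [hij])
    (fun b _ => measurableSet_singleton b)

lemma aux_PU_true {n B2 : ℕ} (hn : 0 < n) (PU : Measure (Fin n → Bool)) [IsProbabilityMeasure PU]
    (hPUv : ∀ v : Fin n → Bool, PU {v}
      = if (univ.filter fun i => v i = true).card = B2
        then ((n.choose B2 : ENNReal))⁻¹ else 0)
    (j : Fin n) : PU {v | v j = true} = (B2 : ENNReal) / n := by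
  have hset : ∀ i : Fin n, PU {v | v i = true}
      = ∑ v ∈ univ.filter (fun v : Fin n → Bool => v i = true), PU {v} := by
    intro i
    rw [← aux_measure_finset]
    congr 1; ext v; simp
  have hcard : ∀ (σ : Equiv.Perm (Fin n)) (v : Fin n → Bool),
      (univ.filter fun k => v (σ k) = true).card = (univ.filter fun k => v k = true).card := by
    intro σ v
    apply Finset.card_bij (fun k _ => σ k)
    · intro a ha; simp only [mem_filter, mem_univ, true_and] at ha ⊢; exact ha
    · intro a _ b _ hab; exact σ.injective hab
    · intro b hb; simp only [mem_filter, mem_univ, true_and] at hb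
      exact ⟨σ.symm b, by simp [hb], by simp⟩
  have hswap : ∀ i, PU {v | v i = true} = PU {v | v j = true} := by
    intro i
    rw [hset i, hset j]
    apply Finset.sum_nbij' (i := fun v => v ∘ (Equiv.swap i j : Equiv.Perm (Fin n)))
      (j := fun v => v ∘ (Equiv.swap i j : Equiv.Perm (Fin n)))
    · intro v hv; simp only [mem_filter, mem_univ, true_and] at hv ⊢
      simpa [Equiv.swap_apply_right] using hv
    · intro v hv; simp only [mem_filter, mem_univ, true_and] at hv ⊢
      simpa [Equiv.swap_apply_left] using hv
    · intro v _; funext k; simp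
    · intro v _; funext k; simp
    · intro v _
      rw [hPUv, hPUv]
      simp only [Function.comp_apply]
      simp only [hcard (Equiv.swap i j) v]
  have h3 : ∑ v : Fin n → Bool, PU {v} = 1 := by
    rw [← aux_measure_finset, Finset.coe_univ, measure_univ]
  have hsumB : ∑ i : Fin n, PU {v | v i = true} = (B2 : ENNReal) := by
    have h1 : ∀ i : Fin n, PU {v | v i = true}
        = ∑ v : Fin n → Bool, if v i = true then PU {v} else 0 := by
      intro i; rw [hset i, Finset.sum_filter]
    simp_rw [h1]
    rw [Finset.sum_comm]
    have h2 : ∀ v : Fin n → Bool,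
        (∑ i : Fin n, if v i = true then PU {v} else 0) = B2 • PU {v} := by
      intro v
      rw [← Finset.sum_filter, Finset.sum_const]
      by_cases hc : (univ.filter fun i => v i = true).card = B2
      · rw [hc]
      · rw [hPUv v, if_neg hc]; simp
    simp_rw [h2]
    rw [← Finset.smul_sum, h3]
    simp
  have hkey : (n : ENNReal) * PU {v | v j = true} = (B2 : ENNReal) := by
    calc (n : ENNReal) * PU {v | v j = true}
        = ∑ _i : Fin n, PU {v | v j = true} := by
          rw [Finset.sum_const, Finset.card_univ, Fintype.card_fin, nsmul_eq_mul]
      _ = ∑ i : Fin n, PU {v | v i = true} :=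
          Finset.sum_congr rfl fun i _ => (hswap i).symm
      _ = (B2 : ENNReal) := hsumB
  exact (ENNReal.eq_div_iff (by exact_mod_cast hn.ne') (ENNReal.natCast_ne_top n)).mpr hkey

lemma aux_PU_false {n B2 : ℕ} (hn : 0 < n) (PU : Measure (Fin n → Bool)) [IsProbabilityMeasure PU]
    (hPUv : ∀ v : Fin n → Bool, PU {v}
      = if (univ.filter fun i => v i = true).card = B2
        then ((n.choose B2 : ENNReal))⁻¹ else 0)
    (j : Fin n) : PU {v | v j = false} = 1 - (B2 : ENNReal) / n := by
  have hmeas : MeasurableSet {v : Fin n → Bool | v j = true} := by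
    have h : {v : Fin n → Bool | v j = true} = (fun v : Fin n → Bool => v j) ⁻¹' {true} := rfl
    rw [h]; exact measurable_pi_apply j (measurableSet_singleton true)
  have hc : {v : Fin n → Bool | v j = false} = {v | v j = true}ᶜ := by
    ext v; simp only [Set.mem_setOf_eq, Set.mem_compl_iff, Bool.not_eq_true]
  rw [hc, measure_compl hmeas (measure_ne_top _ _), measure_univ,
    aux_PU_true hn PU hPUv j]

/-- **Average staleness bound** (Lemma `staleness`).
Consider iterates `x^{t+1} = x^t - γ G^{t+1}` in `ℝ^d` and the per-index staleness
process: `φ_j^0 = x^0`, and at each time `t ≥ 1`, independently of the past, with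
probability `p_out` set `φ_j^t = x^{t-1}` for all `j` (large batch); otherwise a
uniformly random subset of `B₂` of the `n` indices (indicator vector `U^t`) is
selected and `φ_j^t = x^{t-1}` for selected `j`, `φ_j^t = φ_j^{t-1}` otherwise.  With
`Ξ^t = (1/n) ∑_j ‖x^t - φ_j^t‖²`,
`(1/T) ∑_{t<T} E[Ξ^t] ≤ (6n²/B₂²) γ² (1/T) ∑_{t<T} E[‖G^{t+1}‖²]`. -/
theorem stmt_16
    (d n B2 T : ℕ) (hn : 0 < n) (hB2 : 0 < B2) (hB2n : B2 ≤ n) (hT : 0 < T)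
    {Ω : Type*} {mΩ : MeasurableSpace Ω} (μ : Measure Ω) [IsProbabilityMeasure μ]
    (ℱ : Filtration ℕ mΩ)
    (γ pout : ℝ) (hγ : 0 < γ) (hpout0 : 0 ≤ pout) (hpout1 : pout ≤ 1)
    (x G : ℕ → Ω → EuclideanSpace ℝ (Fin d))
    (φ : ℕ → Fin n → Ω → EuclideanSpace ℝ (Fin d))
    (χ : ℕ → Ω → Bool) (U : ℕ → Ω → Fin n → Bool)
    -- the iteration and the staleness recursion
    (hxrec : ∀ t ω, x (t + 1) ω = x t ω - γ • G (t + 1) ω)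
    (hφ0 : ∀ j ω, φ 0 j ω = x 0 ω)
    (hφrec : ∀ t j ω, φ (t + 1) j ω =
      if χ (t + 1) ω = true then x t ω
      else if U (t + 1) ω j = true then x t ω else φ t j ω)
    -- adaptedness and square-integrability
    (hxad : ∀ t, Measurable[ℱ t] (x t))
    (hGad : ∀ t, Measurable[ℱ (t + 1)] (G (t + 1)))
    (hφad : ∀ t j, Measurable[ℱ t] (φ t j))
    (hselad : ∀ t, Measurable[ℱ (t + 1)] fun ω => (χ (t + 1) ω, U (t + 1) ω))
    (hG2 : ∀ t, MemLp (G (t + 1)) 2 μ) (hx02 : MemLp (x 0) 2 μ)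
    -- the coin and subset at time `t+1` are independent of the past …
    (hindep : ∀ t, Indep
      (MeasurableSpace.comap (fun ω => (χ (t + 1) ω, U (t + 1) ω)) inferInstance)
      (ℱ t) μ)
    -- … the coin is Bernoulli(p_out), independent of the subset, which is uniform
    -- over the subsets of cardinality `B₂`
    (PB : Measure Bool) (PU : Measure (Fin n → Bool))
    (hPB : IsProbabilityMeasure PB) (hPU : IsProbabilityMeasure PU)
    (hPBt : PB {true} = ENNReal.ofReal pout)
    (hPUv : ∀ v : Fin n → Bool, PU {v}
      = if (univ.filter fun i => v i = true).card = B2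
        then ((n.choose B2 : ENNReal))⁻¹ else 0)
    (hlaw : ∀ t, μ.map (fun ω => (χ (t + 1) ω, U (t + 1) ω)) = PB.prod PU) :
    (T : ℝ)⁻¹ * ∑ t ∈ Finset.range T,
        ∫ ω, (n : ℝ)⁻¹ * ∑ j, ‖x t ω - φ t j ω‖ ^ 2 ∂μ
      ≤ (6 * (n : ℝ) ^ 2 / (B2 : ℝ) ^ 2) * γ ^ 2
          * ((T : ℝ)⁻¹ * ∑ t ∈ Finset.range T, ∫ ω, ‖G (t + 1) ω‖ ^ 2 ∂μ) := by
  classical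
  have hnR : (0:ℝ) < n := by exact_mod_cast hn
  have hbR : (0:ℝ) < B2 := by exact_mod_cast hB2
  have hbnR : (B2:ℝ) ≤ n := by exact_mod_cast hB2n
  set nR : ℝ := (n : ℝ) with hnRdef
  set bR : ℝ := (B2 : ℝ) with hbRdef
  set β : ℝ := bR / (2 * nR) with hβdef
  have hβ : 0 < β := by positivity
  set K : ℝ := 3 * nR / bR with hKdef
  have hβinv : β⁻¹ = 2 * nR / bR := by
    rw [hβdef, inv_div]
  have hKge : 1 + β⁻¹ ≤ K := by
    rw [hβinv, hKdef]
    have h6 : 3 * nR / bR - (1 + 2 * nR / bR) = (nR - bR) / bR := by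
      field_simp
      ring
    have h5 : (0:ℝ) ≤ (nR - bR) / bR := div_nonneg (by linarith) hbR.le
    linarith
  have hK1 : (1:ℝ) ≤ K := le_trans (by nlinarith [inv_pos.mpr hβ]) hKge
  -- measurability
  have hxm : ∀ t, Measurable (x t) := fun t => (hxad t).mono (ℱ.le t) le_rfl
  have hφm : ∀ t j, Measurable (φ t j) := fun t j => (hφad t j).mono (ℱ.le t) le_rfl
  have hGm : ∀ t, Measurable (G (t + 1)) := fun t => (hGad t).mono (ℱ.le (t + 1)) le_rfl
  have hpairm : ∀ t, Measurable (fun ω => (χ (t + 1) ω, U (t + 1) ω)) :=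
    fun t => (hselad t).mono (ℱ.le (t + 1)) le_rfl
  -- square integrability
  have hx2 : ∀ t, MemLp (x t) 2 μ := by
    intro t; induction t with
    | zero => exact hx02
    | succ t ih =>
      have hfe : x (t + 1) = fun ω => x t ω - γ • G (t + 1) ω := funext (hxrec t)
      rw [hfe]
      exact ih.sub ((hG2 t).const_smul γ)
  have hφ2 : ∀ t j, MemLp (φ t j) 2 μ := by
    intro t; induction t with
    | zero =>
      intro j
      have hfe : φ 0 j = x 0 := funext (hφ0 j)
      rw [hfe]; exact hx02
    | succ t ih =>
      intro j
      refine MemLp.of_le ((hx2 t).norm.add ((ih j).norm))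
        ((hφm (t + 1) j).aestronglyMeasurable) ?_
      refine Filter.Eventually.of_forall fun ω => ?_
      have h0 : (0:ℝ) ≤ ‖x t ω‖ + ‖φ t j ω‖ := by positivity
      simp only [Pi.add_apply]
      rw [hφrec t j ω, Real.norm_of_nonneg h0]
      split_ifs
      · exact le_add_of_nonneg_right (norm_nonneg _)
      · exact le_add_of_nonneg_right (norm_nonneg _)
      · exact le_add_of_nonneg_left (norm_nonneg _)
  have hf2 : ∀ t j, Integrable (fun ω => ‖x t ω - φ t j ω‖ ^ 2) μ := fun t j =>
    (memLp_two_iff_integrable_sq_norm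
      (((hxm t).sub (hφm t j)).aestronglyMeasurable)).mp ((hx2 t).sub (hφ2 t j))
  have hg2 : ∀ t, Integrable (fun ω => ‖G (t + 1) ω‖ ^ 2) μ := fun t =>
    (memLp_two_iff_integrable_sq_norm (hGm t).aestronglyMeasurable).mp (hG2 t)
  have hgnn : ∀ t, 0 ≤ ∫ ω, ‖G (t + 1) ω‖ ^ 2 ∂μ :=
    fun t => integral_nonneg fun ω => by positivity
  -- the "no refresh" set and its probability
  have hSmeas : ∀ j : Fin n,
      MeasurableSet {p : Bool × (Fin n → Bool) | p.1 = false ∧ p.2 j = false} := by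
    intro j
    have h1 : {p : Bool × (Fin n → Bool) | p.1 = false ∧ p.2 j = false}
        = (Prod.fst ⁻¹' {false})
          ∩ ((fun p : Bool × (Fin n → Bool) => p.2 j) ⁻¹' {false}) := by
      ext p; simp [Set.mem_setOf_eq]
    rw [h1]
    exact (measurable_fst (measurableSet_singleton false)).inter
      (((measurable_pi_apply j).comp measurable_snd) (measurableSet_singleton false))
  have hμA : ∀ t (j : Fin n),
      (μ ((fun ω => (χ (t + 1) ω, U (t + 1) ω)) ⁻¹'
        {p : Bool × (Fin n → Bool) | p.1 = false ∧ p.2 j = false})).toReal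
        ≤ 1 - bR / nR := by
    intro t j
    have h1 : μ ((fun ω => (χ (t + 1) ω, U (t + 1) ω)) ⁻¹'
        {p : Bool × (Fin n → Bool) | p.1 = false ∧ p.2 j = false})
        ≤ 1 - (B2 : ENNReal) / n := by
      rw [← Measure.map_apply (hpairm t) (hSmeas j), hlaw t]
      calc (PB.prod PU) {p : Bool × (Fin n → Bool) | p.1 = false ∧ p.2 j = false}
          ≤ (PB.prod PU) (Set.univ ×ˢ {v : Fin n → Bool | v j = false}) :=
            measure_mono (fun p hp => ⟨Set.mem_univ _, hp.2⟩)
        _ = PB Set.univ * PU {v : Fin n → Bool | v j = false} := Measure.prod_prod _ _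
        _ = 1 - (B2 : ENNReal) / n := by
            rw [measure_univ, one_mul, aux_PU_false hn PU hPUv j]
    have hdiv1 : (B2 : ENNReal) / n ≤ 1 := by
      apply ENNReal.div_le_of_le_mul
      rw [one_mul]
      exact_mod_cast hB2n
    have h2 : ((1:ENNReal) - (B2 : ENNReal) / n).toReal = 1 - bR / nR := by
      rw [ENNReal.toReal_sub_of_le hdiv1 ENNReal.one_ne_top, ENNReal.toReal_one,
        ENNReal.toReal_div]
      simp [hnRdef, hbRdef]
    calc (μ _).toReal ≤ ((1:ENNReal) - (B2 : ENNReal) / n).toReal :=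
          ENNReal.toReal_mono (by
            exact ENNReal.sub_ne_top ENNReal.one_ne_top) h1
      _ = 1 - bR / nR := h2
  -- the key one-step inequality, per index j
  have hstep : ∀ t (j : Fin n),
      ∫ ω, ‖x (t + 1) ω - φ (t + 1) j ω‖ ^ 2 ∂μ
        ≤ (1 + β) * ((1 - bR / nR) * ∫ ω, ‖x t ω - φ t j ω‖ ^ 2 ∂μ)
          + K * γ ^ 2 * ∫ ω, ‖G (t + 1) ω‖ ^ 2 ∂μ := by
    intro t j
    set S : Set (Bool × (Fin n → Bool)) :=
      {p : Bool × (Fin n → Bool) | p.1 = false ∧ p.2 j = false} with hSdef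
    set A : Set Ω := (fun ω => (χ (t + 1) ω, U (t + 1) ω)) ⁻¹' S with hAdef
    have hAmeas : MeasurableSet A := hpairm t (hSmeas j)
    set D : Ω → ℝ := fun ω => if χ (t + 1) ω = false ∧ U (t + 1) ω j = false
      then (1:ℝ) else 0 with hDdef
    have hDind : D = A.indicator (1 : Ω → ℝ) := by
      funext ω
      by_cases h : χ (t + 1) ω = false ∧ U (t + 1) ω j = false
      · rw [Set.indicator_of_mem (show ω ∈ A from h)]
        simp only [hDdef, if_pos h, Pi.one_apply]
      · rw [Set.indicator_of_notMem (show ω ∉ A from h)]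
        simp only [hDdef, if_neg h]
    have hDm : Measurable D := by
      rw [hDind]; exact measurable_const.indicator hAmeas
    have hD1 : Measurable[(MeasurableSpace.comap
        (fun ω => (χ (t + 1) ω, U (t + 1) ω)) inferInstance)] D := by
      have hrepr : D = (fun p : Bool × (Fin n → Bool) =>
          if p.1 = false ∧ p.2 j = false then (1:ℝ) else 0)
            ∘ (fun ω => (χ (t + 1) ω, U (t + 1) ω)) := rfl
      rw [hrepr]
      exact (Measurable.ite (hSmeas j) measurable_const measurable_const).comp
        (Measurable.of_comap_le le_rfl)
    have hfFt : Measurable[ℱ t] (fun ω => ‖x t ω - φ t j ω‖ ^ 2) := by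
      have h1 : Measurable[ℱ t] fun ω => x t ω - φ t j ω := (hxad t).sub (hφad t j)
      have h2 : Continuous fun v : EuclideanSpace ℝ (Fin d) => ‖v‖ ^ 2 :=
        (continuous_norm).pow 2
      exact h2.measurable.comp h1
    have hIndep : IndepFun D (fun ω => ‖x t ω - φ t j ω‖ ^ 2) μ :=
      aux_indepFun (hindep t) hD1 hfFt
    have hDintval : ∫ ω, D ω ∂μ = (μ A).toReal := by
      rw [hDind]
      exact integral_indicator_one hAmeas
    have hDf : Integrable (fun ω => D ω * ‖x t ω - φ t j ω‖ ^ 2) μ :=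
      (hf2 t j).bdd_mul (c := 1) hDm.aestronglyMeasurable
        (Filter.Eventually.of_forall fun ω => by simp only [hDdef]; split_ifs <;> simp)
    -- pointwise bound
    have hpt : ∀ ω, ‖x (t + 1) ω - φ (t + 1) j ω‖ ^ 2
        ≤ (1 + β) * (D ω * ‖x t ω - φ t j ω‖ ^ 2) + K * γ ^ 2 * ‖G (t + 1) ω‖ ^ 2 := by
      intro ω
      rw [hxrec t ω, hφrec t j ω]
      by_cases href : χ (t + 1) ω = true ∨ U (t + 1) ω j = true
      · have hφeq : (if χ (t + 1) ω = true then x t ω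
            else if U (t + 1) ω j = true then x t ω else φ t j ω) = x t ω := by
          split_ifs with h1 h2
          · rfl
          · rfl
          · tauto
        have hD0 : D ω = 0 := by
          have hcond : ¬(χ (t + 1) ω = false ∧ U (t + 1) ω j = false) := by
            rcases href with h | h <;> simp [h]
          simp only [hDdef, if_neg hcond]
        rw [hφeq, hD0]
        have heq : x t ω - γ • G (t + 1) ω - x t ω = -(γ • G (t + 1) ω) := by abel
        rw [heq, norm_neg, norm_smul, Real.norm_eq_abs, abs_of_pos hγ, mul_pow]
        have hGnn : (0:ℝ) ≤ ‖G (t + 1) ω‖ ^ 2 := by positivity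
        nlinarith [mul_nonneg (mul_nonneg (sub_nonneg.mpr hK1) (sq_nonneg γ)) hGnn]
      · push_neg at href
        obtain ⟨h1, h2⟩ := href
        simp only [Bool.not_eq_true] at h1 h2
        have hφeq : (if χ (t + 1) ω = true then x t ω
            else if U (t + 1) ω j = true then x t ω else φ t j ω) = φ t j ω := by
          rw [if_neg (by simp [h1]), if_neg (by simp [h2])]
        have hD1' : D ω = 1 := by simp only [hDdef, if_pos (And.intro h1 h2)]
        rw [hφeq, hD1']
        set a : ℝ := ‖x t ω - φ t j ω‖ with hadef
        set b : ℝ := γ * ‖G (t + 1) ω‖ with hbdef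
        have ha0 : 0 ≤ a := norm_nonneg _
        have hb0 : 0 ≤ b := by positivity
        have hle : ‖x t ω - γ • G (t + 1) ω - φ t j ω‖ ≤ a + b := by
          have heq : x t ω - γ • G (t + 1) ω - φ t j ω
              = (x t ω - φ t j ω) - γ • G (t + 1) ω := by abel
          rw [heq]
          refine (norm_sub_le _ _).trans ?_
          rw [norm_smul, Real.norm_eq_abs, abs_of_pos hγ]
        have hsq : ‖x t ω - γ • G (t + 1) ω - φ t j ω‖ ^ 2 ≤ (a + b) ^ 2 :=
          pow_le_pow_left₀ (norm_nonneg _) hle 2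
        have hbb : γ ^ 2 * ‖G (t + 1) ω‖ ^ 2 = b ^ 2 := (mul_pow γ _ 2).symm
        have hkey : 2 * (a * b) ≤ β * a ^ 2 + β⁻¹ * b ^ 2 := by
          have hc : β * β⁻¹ = 1 := mul_inv_cancel₀ hβ.ne'
          have h2' : 0 ≤ β * (β * a ^ 2 + β⁻¹ * b ^ 2 - 2 * (a * b)) := by
            nlinarith [sq_nonneg (β * a - b)]
          nlinarith [h2', hβ]
        have hKb : β⁻¹ * b ^ 2 ≤ (K - 1) * b ^ 2 :=
          mul_le_mul_of_nonneg_right (by linarith [hKge]) (sq_nonneg b)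
        calc ‖x t ω - γ • G (t + 1) ω - φ t j ω‖ ^ 2 ≤ (a + b) ^ 2 := hsq
          _ ≤ (1 + β) * (1 * a ^ 2) + K * b ^ 2 := by nlinarith [hkey, hKb, sq_nonneg b]
          _ = (1 + β) * (1 * a ^ 2) + K * γ ^ 2 * ‖G (t + 1) ω‖ ^ 2 := by
              rw [mul_assoc, hbb]
    -- integrate the pointwise bound
    have hcombInt : Integrable (fun ω =>
        (1 + β) * (D ω * ‖x t ω - φ t j ω‖ ^ 2) + K * γ ^ 2 * ‖G (t + 1) ω‖ ^ 2) μ :=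
      (hDf.const_mul _).add ((hg2 t).const_mul _)
    have hfnn : 0 ≤ ∫ ω, ‖x t ω - φ t j ω‖ ^ 2 ∂μ :=
      integral_nonneg fun ω => by positivity
    calc ∫ ω, ‖x (t + 1) ω - φ (t + 1) j ω‖ ^ 2 ∂μ
        ≤ ∫ ω, ((1 + β) * (D ω * ‖x t ω - φ t j ω‖ ^ 2)
            + K * γ ^ 2 * ‖G (t + 1) ω‖ ^ 2) ∂μ :=
          integral_mono (hf2 (t + 1) j) hcombInt hpt
      _ = (1 + β) * ∫ ω, D ω * ‖x t ω - φ t j ω‖ ^ 2 ∂μ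
            + K * γ ^ 2 * ∫ ω, ‖G (t + 1) ω‖ ^ 2 ∂μ := by
          rw [integral_add (hDf.const_mul _) ((hg2 t).const_mul _),
            integral_const_mul, integral_const_mul]
      _ = (1 + β) * ((∫ ω, D ω ∂μ) * ∫ ω, ‖x t ω - φ t j ω‖ ^ 2 ∂μ)
            + K * γ ^ 2 * ∫ ω, ‖G (t + 1) ω‖ ^ 2 ∂μ := by
          rw [hIndep.integral_fun_mul_eq_mul_integral hDm.aestronglyMeasurable (hf2 t j).aestronglyMeasurable]
      _ ≤ (1 + β) * ((1 - bR / nR) * ∫ ω, ‖x t ω - φ t j ω‖ ^ 2 ∂μ)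
            + K * γ ^ 2 * ∫ ω, ‖G (t + 1) ω‖ ^ 2 ∂μ := by
          have hDle : ∫ ω, D ω ∂μ ≤ 1 - bR / nR := by
            rw [hDintval]; exact hμA t j
          have := mul_le_mul_of_nonneg_right hDle hfnn
          nlinarith [this, hβ]
  -- sum over j: the recursion for e
  set e : ℕ → ℝ := fun t => ∑ j : Fin n, ∫ ω, ‖x t ω - φ t j ω‖ ^ 2 ∂μ with hedef
  have henn : ∀ t, 0 ≤ e t := fun t =>
    Finset.sum_nonneg fun j _ => integral_nonneg fun ω => by positivity
  have he0 : e 0 = 0 := by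
    rw [hedef]
    refine Finset.sum_eq_zero fun j _ => ?_
    have hz : (fun ω => ‖x 0 ω - φ 0 j ω‖ ^ 2) = fun _ => (0:ℝ) := by
      funext ω; rw [hφ0 j ω]; simp
    simp [hz]
  have hr : (1 + β) * (1 - bR / nR) ≤ 1 - β := by
    rw [hβdef]
    have h6 : (1 - bR / (2 * nR)) - (1 + bR / (2 * nR)) * (1 - bR / nR)
        = bR ^ 2 / (2 * nR ^ 2) := by
      field_simp
      ring
    have h5 : (0:ℝ) ≤ bR ^ 2 / (2 * nR ^ 2) := by positivity
    linarith
  have herec : ∀ t, e (t + 1) ≤ (1 - β) * e t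
      + nR * (K * γ ^ 2) * ∫ ω, ‖G (t + 1) ω‖ ^ 2 ∂μ := by
    intro t
    calc e (t + 1) ≤ ∑ j : Fin n,
        ((1 + β) * ((1 - bR / nR) * ∫ ω, ‖x t ω - φ t j ω‖ ^ 2 ∂μ)
          + K * γ ^ 2 * ∫ ω, ‖G (t + 1) ω‖ ^ 2 ∂μ) :=
        Finset.sum_le_sum fun j _ => hstep t j
      _ = (1 + β) * (1 - bR / nR) * e t
          + nR * (K * γ ^ 2) * ∫ ω, ‖G (t + 1) ω‖ ^ 2 ∂μ := by
        simp_rw [← mul_assoc]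
        rw [Finset.sum_add_distrib, ← Finset.mul_sum, Finset.sum_const, Finset.card_univ,
          Fintype.card_fin, nsmul_eq_mul, hedef]
        ring
      _ ≤ (1 - β) * e t + nR * (K * γ ^ 2) * ∫ ω, ‖G (t + 1) ω‖ ^ 2 ∂μ := by
        have := mul_le_mul_of_nonneg_right hr (henn t)
        linarith
  -- telescoping sum
  set SG : ℝ := ∑ t ∈ Finset.range T, ∫ ω, ‖G (t + 1) ω‖ ^ 2 ∂μ with hSGdef
  have hSGnn : 0 ≤ SG := Finset.sum_nonneg fun t _ => hgnn t
  have hsum : β * ∑ t ∈ Finset.range T, e t ≤ nR * (K * γ ^ 2) * SG := by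
    have h1 : ∀ t, β * e t ≤ (e t - e (t + 1))
        + nR * (K * γ ^ 2) * ∫ ω, ‖G (t + 1) ω‖ ^ 2 ∂μ := by
      intro t; have := herec t; nlinarith [this]
    calc β * ∑ t ∈ Finset.range T, e t = ∑ t ∈ Finset.range T, β * e t :=
          Finset.mul_sum _ _ _
      _ ≤ ∑ t ∈ Finset.range T, ((e t - e (t + 1))
            + nR * (K * γ ^ 2) * ∫ ω, ‖G (t + 1) ω‖ ^ 2 ∂μ) :=
          Finset.sum_le_sum fun t _ => h1 t
      _ = (e 0 - e T) + ∑ t ∈ Finset.range T,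
            nR * (K * γ ^ 2) * ∫ ω, ‖G (t + 1) ω‖ ^ 2 ∂μ := by
          rw [Finset.sum_add_distrib, Finset.sum_range_sub']
      _ ≤ ∑ t ∈ Finset.range T, nR * (K * γ ^ 2) * ∫ ω, ‖G (t + 1) ω‖ ^ 2 ∂μ := by
          rw [he0]; linarith [henn T]
      _ = nR * (K * γ ^ 2) * SG := by rw [hSGdef, ← Finset.mul_sum]
  have hesum : ∑ t ∈ Finset.range T, e t ≤ 6 * nR ^ 3 / bR ^ 2 * γ ^ 2 * SG := by
    have h2 : ∑ t ∈ Finset.range T, e t ≤ nR * (K * γ ^ 2) * SG / β := by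
      rw [le_div_iff₀ hβ]
      nlinarith [hsum]
    refine h2.trans (le_of_eq ?_)
    rw [hKdef, hβdef]
    field_simp
    ring
  -- final assembly
  have hTR : (0:ℝ) < T := by exact_mod_cast hT
  have hLHSeq : ∀ t, ∫ ω, (n : ℝ)⁻¹ * ∑ j, ‖x t ω - φ t j ω‖ ^ 2 ∂μ
      = (n : ℝ)⁻¹ * e t := by
    intro t
    rw [integral_const_mul, hedef]
    congr 1
    exact integral_finset_sum univ fun j _ => hf2 t j
  calc (T : ℝ)⁻¹ * ∑ t ∈ Finset.range T,
        ∫ ω, (n : ℝ)⁻¹ * ∑ j, ‖x t ω - φ t j ω‖ ^ 2 ∂μ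
      = (T : ℝ)⁻¹ * ((n : ℝ)⁻¹ * ∑ t ∈ Finset.range T, e t) := by
        congr 1
        rw [Finset.mul_sum]
        exact Finset.sum_congr rfl fun t _ => hLHSeq t
    _ ≤ (T : ℝ)⁻¹ * ((n : ℝ)⁻¹ * (6 * nR ^ 3 / bR ^ 2 * γ ^ 2 * SG)) := by
        have h3 : (0:ℝ) ≤ (T : ℝ)⁻¹ := by positivity
        have h4 : (0:ℝ) ≤ (n : ℝ)⁻¹ := by positivity
        exact mul_le_mul_of_nonneg_left (mul_le_mul_of_nonneg_left hesum h4) h3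
    _ = (6 * (n : ℝ) ^ 2 / (B2 : ℝ) ^ 2) * γ ^ 2 * ((T : ℝ)⁻¹ * SG) := by
        rw [hnRdef, hbRdef]
        field_simp
end
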